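/- Let (Q,·) be a RIP loop with self map σ and (H,∘) its A-holomorph with σ'(α,x) = (α,σ(x)). Then (H,∘) is a σ'-generalized Bol loop if and only if: (1) (Q,·) is a σ-generalized Bol loop, and (2) σ(x)^{-1}·σ(xγ^{-1}) ∈ N_ρ(Q,·) and σ(x)^{-1}·(σ(x))α^{-1} ∈ N_ρ(Q,·) for all x ∈ Q and all α,γ ∈ A(Q). -/
import Mathlib


/-- A loop: a quasigroup with two-sided identity. -/
class MyLoop (L : Type*) extends Mul L, One L where
  one_mul : ∀ a : L, 1 * a = a
  mul_one : ∀ a : L, a * 1 = a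
  ldiv : L → L → L
  rdiv : L → L → L
  mul_ldiv : ∀ a b : L, a * ldiv a b = b
  ldiv_mul : ∀ a b : L, ldiv a (a * b) = b
  rdiv_mul : ∀ a b : L, rdiv a b * b = a
  mul_rdiv : ∀ a b : L, rdiv (a * b) b = a

namespace MyLoop

variable {L : Type*} [MyLoop L]

/-- right inverse: `x * rho x = 1` -/
def rho (x : L) : L := ldiv x 1

/-- left inverse: `lam x * x = 1` -/
def lam (x : L) : L := rdiv 1 x

/-- right translation `R_a : y ↦ y * a`, as a bijection -/
def Rt (a : L) : Equiv.Perm L :=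
  ⟨fun y => y * a, fun y => rdiv y a, fun y => mul_rdiv y a, fun y => rdiv_mul y a⟩

/-- left translation `L_a : y ↦ a * y`, as a bijection -/
def Lt (a : L) : Equiv.Perm L :=
  ⟨fun y => a * y, fun y => ldiv a y, fun y => ldiv_mul a y, fun y => mul_ldiv a y⟩

/-- σ-generalized (right) Bol loop identity -/
def GBol (σ : L → L) : Prop := ∀ x y z : L, ((x * y) * z) * σ y = x * ((y * z) * σ y)

/-- σ-generalized left Bol loop identity -/
def LBol (σ : L → L) : Prop := ∀ x y z : L, σ y * (z * (y * x)) = (σ y * (z * y)) * x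

/-- σ-M-loop identity -/
def MLoopP (σ : L → L) : Prop := ∀ x y z : L, (x * y) * (z * σ x) = (x * (y * z)) * σ x

/-- right inverse property -/
def RIP (L : Type*) [MyLoop L] : Prop := ∀ x y : L, (y * x) * rho x = y

/-- left inverse property -/
def LIP (L : Type*) [MyLoop L] : Prop := ∀ x y : L, lam x * (x * y) = y

/-- right nucleus -/
def Nrho (L : Type*) [MyLoop L] : Set L := {a | ∀ y z : L, (z * y) * a = z * (y * a)}

/-- middle nucleus -/
def Nmu (L : Type*) [MyLoop L] : Set L := {a | ∀ y z : L, (z * a) * y = z * (a * y)}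

/-- multiplication of the A-holomorph `H = A × L`, `(α,x)∘(β,y) = (αβ, xβ · y)` -/
def hmul (A : Subgroup (MulAut L)) (p q : ↥A × L) : ↥A × L :=
  (p.1 * q.1, (q.1 : MulAut L) p.2 * q.2)

/-- the right inverse of an element of the holomorph -/
def hrho (A : Subgroup (MulAut L)) (p : ↥A × L) : ↥A × L :=
  (p.1⁻¹, rho ((p.1⁻¹ : MulAut L) p.2))

/-- the holomorph is a σ'-generalized Bol loop, where `σ'(α,x) = (α, σ x)` -/
def HGBol (A : Subgroup (MulAut L)) (σ : L → L) : Prop :=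
  ∀ p q r : ↥A × L,
    hmul A (hmul A (hmul A p q) r) (q.1, σ q.2) =
      hmul A p (hmul A (hmul A q r) (q.1, σ q.2))

end MyLoop

open MyLoop

section Aux

variable {L : Type*} [MyLoop L]

/-- Bol-type identity at a fixed middle element `v` with companion `s`. -/
def Bolat (v s : L) : Prop := ∀ u w : L, ((u * v) * w) * s = u * ((v * w) * s)

lemma lam_eq_rho (hrip : RIP L) (t : L) : rdiv (1 : L) t = rho t := by
  have h := hrip t (rdiv (1 : L) t)
  rw [rdiv_mul, MyLoop.one_mul] at h
  exact h.symm

lemma rho_mul_self (hrip : RIP L) (t : L) : rho t * t = 1 := by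
  rw [← lam_eq_rho hrip]; exact rdiv_mul 1 t

lemma nrho_of_two_bol (hrip : RIP L) {v t s : L}
    (ht : Bolat v t) (hs : Bolat v s) : rho t * s ∈ Nrho L := by
  have key : ∀ u n : L, u * (rdiv n t * s) = rdiv (u * n) t * s := by
    intro u n
    have h1 : ((u * v) * ldiv v (rdiv n t)) * t = u * n := by
      rw [ht u (ldiv v (rdiv n t)), mul_ldiv, rdiv_mul]
    have h2 : (u * v) * ldiv v (rdiv n t) = rdiv (u * n) t := by
      rw [← h1, mul_rdiv]
    have h3 := hs u (ldiv v (rdiv n t))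
    rw [mul_ldiv] at h3
    rw [← h3, h2]
  have hpsi : ∀ u : L, rdiv u t * s = u * (rdiv 1 t * s) := by
    intro u
    rw [key u 1, MyLoop.mul_one]
  intro y z
  rw [← lam_eq_rho hrip]
  calc (z * y) * (rdiv 1 t * s) = rdiv (z * y) t * s := (hpsi (z * y)).symm
    _ = z * (rdiv y t * s) := (key z y).symm
    _ = z * (y * (rdiv 1 t * s)) := by rw [hpsi y]

lemma bol_of_nrho (hrip : RIP L) {v t s : L}
    (ht : Bolat v t) (ha : rho t * s ∈ Nrho L) : Bolat v s := by
  have ha' : ∀ y z : L, (z * y) * (rho t * s) = z * (y * (rho t * s)) := ha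
  have hst : s = t * (rho t * s) := by
    have h1 := ha' t (rho t)
    rw [rho_mul_self hrip, MyLoop.one_mul] at h1
    calc s = ldiv (rho t) (rho t * s) := (ldiv_mul _ _).symm
      _ = ldiv (rho t) (rho t * (t * (rho t * s))) := by rw [← h1]
      _ = t * (rho t * s) := ldiv_mul _ _
  intro u w
  nth_rewrite 1 [hst]
  nth_rewrite 2 [hst]
  calc ((u * v) * w) * (t * (rho t * s))
      = (((u * v) * w) * t) * (rho t * s) := (ha' t ((u * v) * w)).symm
    _ = (u * ((v * w) * t)) * (rho t * s) := by rw [ht]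
    _ = u * (((v * w) * t) * (rho t * s)) := ha' ((v * w) * t) u
    _ = u * ((v * w) * (t * (rho t * s))) := by rw [ha' t (v * w)]

end Aux

/-- for a RIP loop `Q`, the A-holomorph is a σ'-generalized Bol loop
iff `Q` is a σ-generalized Bol loop and `σ(x)⁻¹·σ(xγ⁻¹)` and `σ(x)⁻¹·(σ(x))α⁻¹`
lie in the right nucleus, for all `x ∈ Q` and `α, γ ∈ A(Q)`. -/
theorem holomorph_gbol_iff_nucleus {L : Type*} [MyLoop L] (σ : L → L)
    (A : Subgroup (MulAut L)) (hrip : RIP L) :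
    HGBol A σ ↔
      (GBol σ ∧
        ∀ (x : L) (α γ : ↥A),
          rho (σ x) * σ ((γ⁻¹ : MulAut L) x) ∈ Nrho L ∧
          rho (σ x) * (α⁻¹ : MulAut L) (σ x) ∈ Nrho L) := by
  constructor
  · intro h
    have bol1 : ∀ (δ : ↥A) (v : L), Bolat v (σ ((δ⁻¹ : MulAut L) v)) := by
      intro δ v u w
      have hh := congrArg Prod.snd
        (h (1, (δ⁻¹ : MulAut L) u) (1, (δ⁻¹ : MulAut L) v) (δ, w))
      simpa [hmul, map_mul] using hh
    have hG : GBol σ := by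
      intro x y z
      have hh := bol1 1 y x z
      simpa using hh
    have bolbase : ∀ v : L, Bolat v (σ v) := fun v u w => hG u v w
    have bol2 : ∀ (α : ↥A) (y : L), Bolat y ((α⁻¹ : MulAut L) (σ y)) := by
      intro α y u w
      have hh := congrArg (fun m => (α⁻¹ : MulAut L) m)
        (congrArg Prod.snd (h (1, u) (1, y) (α, (α : MulAut L) w)))
      simpa [hmul, map_mul] using hh
    exact ⟨hG, fun x α γ => ⟨nrho_of_two_bol hrip (bolbase x) (bol1 γ x),
      nrho_of_two_bol hrip (bolbase x) (bol2 α x)⟩⟩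
  · rintro ⟨hG, hN⟩ p q r
    have hb : Bolat (((q.1 * r.1 : ↥A) : MulAut L) q.2) (σ q.2) := by
      have h1 : Bolat (((q.1 * r.1 : ↥A) : MulAut L) q.2)
          (σ (((q.1 * r.1 : ↥A) : MulAut L) q.2)) := fun u w => hG u _ w
      have h2 := (hN (((q.1 * r.1 : ↥A) : MulAut L) q.2) 1 (q.1 * r.1)).1
      have h3 : (((q.1 * r.1 : ↥A) : MulAut L))⁻¹ (((q.1 * r.1 : ↥A) : MulAut L) q.2)
          = q.2 := by simp
      rw [h3] at h2
      exact bol_of_nrho hrip h1 h2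
    have hb2 := hb ((((q.1 * r.1) * q.1 : ↥A) : MulAut L) p.2) ((q.1 : MulAut L) r.2)
    simp only [hmul, Prod.mk.injEq]
    refine ⟨by simp [mul_assoc], ?_⟩
    simpa [map_mul] using hb2
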